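/- The generalized Borel transform intertwines M_r with P_{r,0}: for φ ∈ L²(ℝ⁺, t e^{-t}dt) and x ∈ (0,1], one has (P_{r,0} B[φ])(x) = (B[M_r φ])(x), where (P_{r,0} f)(x) = ρ/(ρ+rx)² f(x/(ρ+rx)), (M_r φ)(t) = (1/ρ) e^{-(r/ρ)t} φ(t/ρ), and ρ = 2-r ∈ (1,2]. -/

import Mathlib

open MeasureTheory

noncomputable def lagMeasure : Measure ℝ :=
  (volume.restrict (Set.Ioi (0:ℝ))).withDensity (fun t => ENNReal.ofReal (t * Real.exp (-t)))

/-- The generalized Borel transform. -/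
noncomputable def borelT (φ : ℝ → ℝ) (x : ℝ) : ℝ :=
  (1/x^2) * ∫ t in Set.Ioi (0:ℝ), Real.exp (-t/x) * Real.exp t * φ t * (t * Real.exp (-t))

theorem stmt_16 :
    ∀ r ∈ Set.Ico (0:ℝ) 1,
      let ρ := 2 - r
      ∀ φ : ℝ → ℝ, MemLp φ 2 lagMeasure →
        ∀ x ∈ Set.Ioc (0:ℝ) 1,
          ρ / (ρ + r * x)^2 * borelT φ (x / (ρ + r * x))
            = borelT (fun t => (1/ρ) * Real.exp (-(r/ρ) * t) * φ (t/ρ)) x := by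
  intro r hr ρ φ hφ x hx
  obtain ⟨hr0, hr1⟩ := hr
  obtain ⟨hx0, hx1⟩ := hx
  have hρ : (0:ℝ) < ρ := by simp only [ρ]; linarith
  have hρ' : ρ ≠ 0 := ne_of_gt hρ
  have hx0' : x ≠ 0 := ne_of_gt hx0
  have hd : (0:ℝ) < ρ + r * x := by nlinarith
  have hd' : ρ + r * x ≠ 0 := ne_of_gt hd
  set g : ℝ → ℝ := fun t =>
    Real.exp (-t/x) * Real.exp t * ((1/ρ) * Real.exp (-(r/ρ) * t) * φ (t/ρ)) *
      (t * Real.exp (-t)) with hg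
  set h : ℝ → ℝ := fun t =>
    Real.exp (-t/(x / (ρ + r * x))) * Real.exp t * φ t * (t * Real.exp (-t)) with hh
  have hsub : ∫ t in Set.Ioi (0:ℝ), g t = ρ * ∫ t in Set.Ioi (0:ℝ), h t := by
    have hcomp := MeasureTheory.integral_comp_mul_left_Ioi g 0 hρ
    rw [mul_zero] at hcomp
    have hgh : ∀ s : ℝ, g (ρ * s) = h s := by
      intro s
      simp only [hg, hh]
      rw [mul_div_cancel_left₀ s hρ']
      have e3 : -s / (x / (ρ + r * x)) = -(ρ*s)/x + -(r/ρ)*(ρ*s) := by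
        field_simp
        ring
      rw [e3, Real.exp_add]
      have e1 : Real.exp (ρ*s) * Real.exp (-(ρ*s)) = 1 := by
        rw [← Real.exp_add, add_neg_cancel, Real.exp_zero]
      have e2 : Real.exp s * Real.exp (-s) = 1 := by
        rw [← Real.exp_add, add_neg_cancel, Real.exp_zero]
      have e4 : (1/ρ) * (ρ * s) = s := by field_simp
      calc Real.exp (-(ρ*s)/x) * Real.exp (ρ*s) * ((1/ρ) * Real.exp (-(r/ρ)*(ρ*s)) * φ s) * ((ρ*s) * Real.exp (-(ρ*s)))
          = (Real.exp (-(ρ*s)/x) * Real.exp (-(r/ρ)*(ρ*s)) * φ s * ((1/ρ)*(ρ*s))) *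
              (Real.exp (ρ*s) * Real.exp (-(ρ*s))) := by ring
        _ = Real.exp (-(ρ*s)/x) * Real.exp (-(r/ρ)*(ρ*s)) * φ s * s := by
              rw [e1, e4, mul_one]
        _ = (Real.exp (-(ρ*s)/x) * Real.exp (-(r/ρ)*(ρ*s)) * φ s * s) *
              (Real.exp s * Real.exp (-s)) := by rw [e2, mul_one]
        _ = Real.exp (-(ρ*s)/x) * Real.exp (-(r/ρ)*(ρ*s)) * Real.exp s * φ s *
              (s * Real.exp (-s)) := by ring
    have h1 : ∫ s in Set.Ioi (0:ℝ), h s = ρ⁻¹ • ∫ t in Set.Ioi (0:ℝ), g t := by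
      rw [← hcomp]
      exact setIntegral_congr_fun measurableSet_Ioi (fun s _ => (hgh s).symm)
    rw [h1, smul_eq_mul, ← mul_assoc, mul_inv_cancel₀ hρ', one_mul]
  simp only [borelT]
  rw [hsub]
  set I := ∫ t in Set.Ioi (0:ℝ), h t with hI
  rw [div_pow]
  field_simp
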